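/- Let u: ℤ² → ℝ be the discrete conformal factors of a locally univalent circle packing of the hexagonal lattice, and suppose inf_{m,n} (u_{m+1,n} − u_{m,n}) > −∞. Then there exist constants k1, k2 such that u_{m+1,n} − u_{m,n} = k1 and u_{m,n+1} − u_{m,n} = k2 for all m, n; equivalently, the radii satisfy r_{m,n} = r_{0,0} · e^{k1 m} · e^{k2 n}, so the packing is a regular hexagonal packing (k1 = k2 = 0) or a Doyle spiral. -/

import Mathlib

open Real

/-- Inner angle at the vertex of radius `a` in the triangle with side lengths
`a+b, a+c, b+c` formed by three mutually externally tangent circles. -/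
noncomputable def ang (a b c : ℝ) : ℝ :=
  Real.arccos (((a + b) ^ 2 + (a + c) ^ 2 - (b + c) ^ 2) / (2 * (a + b) * (a + c)))

/-- The circle packing angle-sum condition at vertex `(m,n)` of the hexagonal lattice
for radii `r`: the six inner angles at `(m,n)` sum to `2π`. -/
noncomputable def packingEq (r : ℤ × ℤ → ℝ) (m n : ℤ) : Prop :=
  ang (r (m, n)) (r (m + 1, n)) (r (m, n + 1)) +
  ang (r (m, n)) (r (m, n + 1)) (r (m - 1, n + 1)) +
  ang (r (m, n)) (r (m - 1, n + 1)) (r (m - 1, n)) +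
  ang (r (m, n)) (r (m - 1, n)) (r (m, n - 1)) +
  ang (r (m, n)) (r (m, n - 1)) (r (m + 1, n - 1)) +
  ang (r (m, n)) (r (m + 1, n - 1)) (r (m + 1, n)) = 2 * Real.pi


namespace DoyleAux


lemma ang_eq_arccos {a b c : ℝ} (ha : 0 < a) (hb : 0 < b) (hc : 0 < c) :
    ang a b c = arccos (1 - 2 * (b * c / ((a + b) * (a + c)))) := by
  unfold ang
  congr 1
  have h1 : a + b ≠ 0 := by positivity
  have h2 : a + c ≠ 0 := by positivity
  field_simp
  ring

lemma Q_pos {a b c : ℝ} (ha : 0 < a) (hb : 0 < b) (hc : 0 < c) :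
    0 < b * c / ((a + b) * (a + c)) := by positivity

lemma Q_lt_one {a b c : ℝ} (ha : 0 < a) (hb : 0 < b) (hc : 0 < c) :
    b * c / ((a + b) * (a + c)) < 1 := by
  rw [div_lt_one (by positivity)]
  nlinarith

lemma cos_ang {a b c : ℝ} (ha : 0 < a) (hb : 0 < b) (hc : 0 < c) :
    Real.cos (ang a b c) = 1 - 2 * (b * c / ((a + b) * (a + c))) := by
  rw [ang_eq_arccos ha hb hc]
  have h1 := Q_pos ha hb hc
  have h2 := Q_lt_one ha hb hc
  exact Real.cos_arccos (by linarith) (by linarith)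

lemma sin_ang {a b c : ℝ} (ha : 0 < a) (hb : 0 < b) (hc : 0 < c) :
    Real.sin (ang a b c) = 2 * Real.sqrt (a * b * c * (a + b + c)) / ((a + b) * (a + c)) := by
  rw [ang_eq_arccos ha hb hc, Real.sin_arccos]
  have hs : Real.sqrt (a * b * c * (a + b + c)) ^ 2 = a * b * c * (a + b + c) :=
    Real.sq_sqrt (by positivity)
  have key : 1 - (1 - 2 * (b * c / ((a + b) * (a + c)))) ^ 2
      = (2 * Real.sqrt (a * b * c * (a + b + c)) / ((a + b) * (a + c))) ^ 2 := by
    rw [div_pow, mul_pow, hs]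
    have h1 : a + b ≠ 0 := by positivity
    have h2 : a + c ≠ 0 := by positivity
    field_simp
    ring
  rw [key, Real.sqrt_sq (by positivity)]

lemma ang_pos {a b c : ℝ} (ha : 0 < a) (hb : 0 < b) (hc : 0 < c) : 0 < ang a b c := by
  rw [ang_eq_arccos ha hb hc, Real.arccos_pos]
  have := Q_pos ha hb hc
  linarith

lemma ang_lt_pi {a b c : ℝ} (ha : 0 < a) (hb : 0 < b) (hc : 0 < c) : ang a b c < π := by
  rw [ang_eq_arccos ha hb hc]
  have h2 := Q_lt_one ha hb hc
  have h1 := Q_pos ha hb hc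
  rcases lt_or_eq_of_le (Real.arccos_le_pi (1 - 2 * (b * c / ((a + b) * (a + c))))) with h | h
  · exact h
  · exfalso
    rw [Real.arccos_eq_pi] at h
    linarith

lemma ang_comm {a b c : ℝ} : ang a b c = ang a c b := by
  unfold ang
  congr 1
  rw [mul_comm (2 * (a + b)) (a + c)]
  ring_nf

lemma ang_homog {a b c k : ℝ} (ha : 0 < a) (hb : 0 < b) (hc : 0 < c) (hk : 0 < k) :
    ang (k * a) (k * b) (k * c) = ang a b c := by
  rw [ang_eq_arccos (by positivity) (by positivity) (by positivity), ang_eq_arccos ha hb hc]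
  congr 2
  have h1 : a + b ≠ 0 := by positivity
  have h2 : a + c ≠ 0 := by positivity
  have hk' : k ≠ 0 := ne_of_gt hk
  field_simp

/-- strict monotonicity in the second argument -/
lemma ang_strictMono {a b b' c : ℝ} (ha : 0 < a) (hb : 0 < b) (hb' : 0 < b') (hc : 0 < c)
    (h : b < b') : ang a b c < ang a b' c := by
  rw [ang_eq_arccos ha hb hc, ang_eq_arccos ha hb' hc]
  have h1 := Q_pos ha hb hc
  have h2 := Q_lt_one ha hb hc
  have h1' := Q_pos ha hb' hc
  have h2' := Q_lt_one ha hb' hc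
  apply Real.strictAntiOn_arccos
  · constructor <;> [skip; skip] <;> linarith
  · constructor <;> [skip; skip] <;> linarith
  · have key : b * c / ((a + b) * (a + c)) < b' * c / ((a + b') * (a + c)) := by
      rw [div_lt_div_iff₀ (by positivity) (by positivity)]
      have expand : b' * c * ((a + b) * (a + c)) - b * c * ((a + b') * (a + c))
          = a * c * (a + c) * (b' - b) := by ring
      nlinarith [mul_pos (mul_pos (mul_pos ha hc) (show (0:ℝ) < a + c by linarith))
        (sub_pos.mpr h)]
    linarith

/-- The three angles of the triangle formed by three mutually tangent circles sum to π. -/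
lemma ang_triangle_sum {a b c : ℝ} (ha : 0 < a) (hb : 0 < b) (hc : 0 < c) :
    ang a b c + ang b a c + ang c a b = π := by
  have hApos := ang_pos ha hb hc
  have hAlt := ang_lt_pi ha hb hc
  have hBpos := ang_pos hb ha hc
  have hBlt := ang_lt_pi hb ha hc
  have hCpos := ang_pos hc ha hb
  have hClt := ang_lt_pi hc ha hb
  have hcosA := cos_ang ha hb hc
  have hcosB := cos_ang hb ha hc
  have hcosC := cos_ang hc ha hb
  have hsinA := sin_ang ha hb hc
  have hsinB := sin_ang hb ha hc
  have hsinC := sin_ang hc ha hb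
  set Δ := Real.sqrt (a * b * c * (a + b + c)) with hΔ
  have hΔB : Real.sqrt (b * a * c * (b + a + c)) = Δ := by rw [hΔ]; congr 1; ring
  have hΔC : Real.sqrt (c * a * b * (c + a + b)) = Δ := by rw [hΔ]; congr 1; ring
  rw [hΔB] at hsinB
  rw [hΔC] at hsinC
  have hΔsq : Δ * Δ = a * b * c * (a + b + c) := by
    have := Real.sq_sqrt (show (0:ℝ) ≤ a * b * c * (a + b + c) by positivity)
    rw [← pow_two]
    exact this
  have hΔpos : 0 < Δ := Real.sqrt_pos.mpr (by positivity)
  set A := ang a b c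
  set B := ang b a c
  set C := ang c a b
  have h1 : (a + b) * (a + c) ≠ 0 := by positivity
  have h2 : (b + a) * (b + c) ≠ 0 := by positivity
  have h3 : (c + a) * (c + b) ≠ 0 := by positivity
  -- sin (A + B) = sin C
  have hsinAB : Real.sin (A + B) = Real.sin C := by
    rw [Real.sin_add, hsinA, hsinB, hcosA, hcosB, hsinC]
    field_simp
    ring
  -- cos (A + B) = - cos C
  have hcosAB : Real.cos (A + B) = -Real.cos C := by
    rw [Real.cos_add, hsinA, hsinB, hcosA, hcosB, hcosC]
    rw [div_mul_div_comm]
    have hnum : 2 * Δ * (2 * Δ) = 4 * (a * b * c * (a + b + c)) := by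
      nlinarith [hΔsq]
    rw [hnum]
    field_simp
    ring
  -- sin C > 0
  have hsinCpos : 0 < Real.sin C := Real.sin_pos_of_pos_of_lt_pi hCpos hClt
  have hABlt : A + B < π := by
    by_contra hcon
    push_neg at hcon
    have heq : Real.sin (A + B - 2 * π) = Real.sin (A + B) := Real.sin_sub_two_pi _
    have hle : Real.sin (A + B - 2 * π) ≤ 0 :=
      Real.sin_nonpos_of_nonpos_of_neg_pi_le (by linarith) (by linarith)
    linarith [hsinAB ▸ (heq ▸ hle)]
  have : A + B = π - C := by
    apply Real.injOn_cos ⟨by linarith, le_of_lt hABlt⟩ ⟨by linarith, by linarith⟩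
    rw [Real.cos_pi_sub, hcosAB]
  linarith



lemma ang_strictMono3 {a b c c' : ℝ} (ha : 0 < a) (hb : 0 < b) (hc : 0 < c) (hc' : 0 < c')
    (h : c < c') : ang a b c < ang a b c' := by
  rw [ang_comm, ang_comm (c := c')]
  exact ang_strictMono ha hc hc' hb h

/-- Doyle's identity: around a circle of radius 1 surrounded by six circles with the
Doyle spiral ratio pattern, the six angles always sum to exactly 2π. -/
lemma doyle {A B : ℝ} (hA : 0 < A) (hB : 0 < B) :
    ang 1 A B + ang 1 B (B / A) + ang 1 (B / A) (1 / A) + ang 1 (1 / A) (1 / B) +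
      ang 1 (1 / B) (A / B) + ang 1 (A / B) A = 2 * π := by
  have hA' : A ≠ 0 := ne_of_gt hA
  have hB' : B ≠ 0 := ne_of_gt hB
  have e2 : ang 1 B (B / A) = ang A (A * B) B := by
    have := ang_homog (a := 1) (b := B) (c := B / A) one_pos hB (by positivity) hA
    rw [mul_one, show A * (B / A) = B by field_simp] at this
    rw [← this, mul_comm A B]
  have e3 : ang 1 (B / A) (1 / A) = ang A B 1 := by
    have := ang_homog (a := 1) (b := B / A) (c := 1 / A) one_pos (by positivity) (by positivity) hA
    rw [mul_one, show A * (B / A) = B by field_simp, show A * (1 / A) = 1 by field_simp] at this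
    rw [← this]
  have e4 : ang 1 (1 / A) (1 / B) = ang (A * B) B A := by
    have := ang_homog (a := 1) (b := 1 / A) (c := 1 / B) one_pos (by positivity) (by positivity)
      (mul_pos hA hB)
    rw [mul_one, show A * B * (1 / A) = B by field_simp, show A * B * (1 / B) = A by field_simp]
      at this
    rw [← this]
  have e5 : ang 1 (1 / B) (A / B) = ang B 1 A := by
    have := ang_homog (a := 1) (b := 1 / B) (c := A / B) one_pos (by positivity) (by positivity) hB
    rw [mul_one, show B * (1 / B) = 1 by field_simp, show B * (A / B) = A by field_simp] at this
    rw [← this]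
  have e6 : ang 1 (A / B) A = ang B A (A * B) := by
    have := ang_homog (a := 1) (b := A / B) (c := A) one_pos (by positivity) hA hB
    rw [mul_one, show B * (A / B) = A by field_simp, mul_comm B A] at this
    rw [← this]
  rw [e2, e3, e4, e5, e6]
  have t1 : ang 1 A B + ang A B 1 + ang B 1 A = π := by
    have := ang_triangle_sum (a := 1) (b := A) (c := B) one_pos hA hB
    rw [show ang A 1 B = ang A B 1 from ang_comm] at this
    linarith
  have t2 : ang A (A * B) B + ang (A * B) B A + ang B A (A * B) = π := by
    have := ang_triangle_sum (a := A) (b := A * B) (c := B) hA (mul_pos hA hB) hB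
    rw [show ang (A * B) A B = ang (A * B) B A from ang_comm] at this
    linarith
  linarith

/-- ang of exponentials is scale invariant -/
lemma ang_exp (x y z : ℝ) : ang (exp x) (exp y) (exp z) = ang 1 (exp (y - x)) (exp (z - x)) := by
  have := ang_homog (a := 1) (b := exp (y - x)) (c := exp (z - x)) one_pos (exp_pos _)
    (exp_pos _) (exp_pos x)
  rw [mul_one, ← Real.exp_add, ← Real.exp_add] at this
  rw [show x + (y - x) = y by ring, show x + (z - x) = z by ring] at this
  exact this

/-- The six-angle sum in difference form. -/
noncomputable def hexSum (k1 s t : ℝ) : ℝ :=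
  ang 1 (exp k1) (exp t) + ang 1 (exp t) (exp (t - k1)) + ang 1 (exp (t - k1)) (exp (-k1)) +
  ang 1 (exp (-k1)) (exp (-s)) + ang 1 (exp (-s)) (exp (k1 - s)) +
  ang 1 (exp (k1 - s)) (exp k1)

lemma hexSum_diag (k1 t : ℝ) : hexSum k1 t t = 2 * π := by
  have h := doyle (A := exp k1) (B := exp t) (exp_pos _) (exp_pos _)
  rw [show exp t / exp k1 = exp (t - k1) from (Real.exp_sub t k1).symm,
      show (1 : ℝ) / exp k1 = exp (-k1) by rw [Real.exp_neg]; ring,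
      show (1 : ℝ) / exp t = exp (-t) by rw [Real.exp_neg]; ring,
      show exp k1 / exp t = exp (k1 - t) from (Real.exp_sub k1 t).symm] at h
  exact h

lemma hexSum_strictAnti (k1 t : ℝ) {s s' : ℝ} (h : s < s') : hexSum k1 s' t < hexSum k1 s t := by
  unfold hexSum
  have h1 : ang 1 (exp (-k1)) (exp (-s')) < ang 1 (exp (-k1)) (exp (-s)) :=
    ang_strictMono3 one_pos (exp_pos _) (exp_pos _) (exp_pos _) (exp_lt_exp.mpr (by linarith))
  have h2 : ang 1 (exp (-s')) (exp (k1 - s')) < ang 1 (exp (-s)) (exp (k1 - s)) := by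
    calc ang 1 (exp (-s')) (exp (k1 - s'))
        < ang 1 (exp (-s)) (exp (k1 - s')) :=
          ang_strictMono one_pos (exp_pos _) (exp_pos _) (exp_pos _) (exp_lt_exp.mpr (by linarith))
      _ < ang 1 (exp (-s)) (exp (k1 - s)) :=
          ang_strictMono3 one_pos (exp_pos _) (exp_pos _) (exp_pos _)
            (exp_lt_exp.mpr (by linarith))
  have h3 : ang 1 (exp (k1 - s')) (exp k1) < ang 1 (exp (k1 - s)) (exp k1) :=
    ang_strictMono one_pos (exp_pos _) (exp_pos _) (exp_pos _) (exp_lt_exp.mpr (by linarith))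
  linarith

lemma hexSum_eq_imp (k1 s t : ℝ) (h : hexSum k1 s t = 2 * π) : s = t := by
  rcases lt_trichotomy s t with hlt | heq | hgt
  · exfalso
    have := hexSum_strictAnti k1 t hlt
    rw [h, hexSum_diag] at this
    exact lt_irrefl _ this
  · exact heq
  · exfalso
    have := hexSum_strictAnti k1 t hgt
    rw [hexSum_diag, h] at this
    exact lt_irrefl _ this



/-- The conductance weight: `∂ ang(a,b,c) / ∂ log b`, symmetric in `a,b`. -/
noncomputable def Wt (A B C : ℝ) : ℝ := Real.sqrt (A * B * C / (A + B + C)) / (A + B)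

lemma Wt_symm {A B C : ℝ} : Wt A B C = Wt B A C := by
  unfold Wt
  rw [show B * A * C = A * B * C by ring, show B + A + C = A + B + C by ring, add_comm B A]

lemma Wt_pos {A B C : ℝ} (hA : 0 < A) (hB : 0 < B) (hC : 0 < C) : 0 < Wt A B C := by
  unfold Wt; positivity

lemma Wt_le_half {A B C : ℝ} (hA : 0 < A) (hB : 0 < B) (hC : 0 < C) : Wt A B C ≤ 1 / 2 := by
  unfold Wt
  rw [div_le_div_iff₀ (by positivity) (by norm_num)]
  have h1 : Real.sqrt (A * B * C / (A + B + C)) ≤ (A + B) / 2 := by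
    rw [show (A + B) / 2 = Real.sqrt (((A + B) / 2) ^ 2) from (Real.sqrt_sq (by positivity)).symm]
    apply Real.sqrt_le_sqrt
    rw [div_le_iff₀ (by positivity)]
    nlinarith [sq_nonneg (A - B), mul_pos hA (mul_pos hB hC)]
  linarith

lemma Wt_eq {A B C : ℝ} (hA : 0 < A) (hB : 0 < B) (hC : 0 < C) :
    Wt A B C = Real.sqrt (A * B * C * (A + B + C)) / ((A + B + C) * (A + B)) := by
  unfold Wt
  have h : A * B * C / (A + B + C) = (Real.sqrt (A * B * C * (A + B + C)) / (A + B + C)) ^ 2 := by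
    rw [div_pow, Real.sq_sqrt (by positivity)]
    field_simp
  rw [h, Real.sqrt_sq (by positivity), div_div]

/-- Key derivative: the angle of the exp-interpolated triangle. -/
lemma hasDerivAt_angExp (x y z a b c t₀ : ℝ) :
    HasDerivAt (fun t => ang (exp (x + t * a)) (exp (y + t * b)) (exp (z + t * c)))
      (Wt (exp (x + t₀ * a)) (exp (y + t₀ * b)) (exp (z + t₀ * c)) * (b - a)
        + Wt (exp (x + t₀ * a)) (exp (z + t₀ * c)) (exp (y + t₀ * b)) * (c - a)) t₀ := by
  set A := exp (x + t₀ * a) with hA_def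
  set B := exp (y + t₀ * b) with hB_def
  set C := exp (z + t₀ * c) with hC_def
  have hA0 : 0 < A := exp_pos _
  have hB0 : 0 < B := exp_pos _
  have hC0 : 0 < C := exp_pos _
  have hABne : A + B ≠ 0 := by positivity
  have hACne : A + C ≠ 0 := by positivity
  have hSne : A + B + C ≠ 0 := by positivity
  -- derivatives of the three exponentials
  have hA : HasDerivAt (fun t : ℝ => exp (x + t * a)) (A * a) t₀ := by
    have h1 : HasDerivAt (fun t : ℝ => x + t * a) a t₀ := by
      simpa using ((hasDerivAt_id t₀).mul_const a).const_add x
    simpa using h1.exp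
  have hB : HasDerivAt (fun t : ℝ => exp (y + t * b)) (B * b) t₀ := by
    have h1 : HasDerivAt (fun t : ℝ => y + t * b) b t₀ := by
      simpa using ((hasDerivAt_id t₀).mul_const b).const_add y
    simpa using h1.exp
  have hC : HasDerivAt (fun t : ℝ => exp (z + t * c)) (C * c) t₀ := by
    have h1 : HasDerivAt (fun t : ℝ => z + t * c) c t₀ := by
      simpa using ((hasDerivAt_id t₀).mul_const c).const_add z
    simpa using h1.exp
  -- derivative of Q
  have hN : HasDerivAt (fun t : ℝ => exp (y + t * b) * exp (z + t * c))
      (B * b * C + B * (C * c)) t₀ := hB.mul hC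
  have hD : HasDerivAt
      (fun t : ℝ => (exp (x + t * a) + exp (y + t * b)) * (exp (x + t * a) + exp (z + t * c)))
      ((A * a + B * b) * (A + C) + (A + B) * (A * a + C * c)) t₀ := (hA.add hB).mul (hA.add hC)
  have hDne : (A + B) * (A + C) ≠ 0 := by positivity
  have hQ : HasDerivAt (fun t : ℝ => exp (y + t * b) * exp (z + t * c) /
      ((exp (x + t * a) + exp (y + t * b)) * (exp (x + t * a) + exp (z + t * c))))
      (((B * b * C + B * (C * c)) * ((A + B) * (A + C)) -
        B * C * ((A * a + B * b) * (A + C) + (A + B) * (A * a + C * c))) /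
        ((A + B) * (A + C)) ^ 2) t₀ := hN.div hD hDne
  set Q' : ℝ := ((B * b * C + B * (C * c)) * ((A + B) * (A + C)) -
        B * C * ((A * a + B * b) * (A + C) + (A + B) * (A * a + C * c))) /
        ((A + B) * (A + C)) ^ 2 with hQ'_def
  have hf : HasDerivAt (fun t : ℝ => 1 - 2 * (exp (y + t * b) * exp (z + t * c) /
      ((exp (x + t * a) + exp (y + t * b)) * (exp (x + t * a) + exp (z + t * c)))))
      (-(2 * Q')) t₀ := (hQ.const_mul 2).const_sub 1
  set v : ℝ := 1 - 2 * (B * C / ((A + B) * (A + C))) with hv_def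
  have hQpos := Q_pos hA0 hB0 hC0
  have hQlt := Q_lt_one hA0 hB0 hC0
  have hv1 : v ≠ -1 := by rw [hv_def]; intro h; nlinarith
  have hv2 : v ≠ 1 := by rw [hv_def]; intro h; nlinarith
  have harc : HasDerivAt arccos (-(1 / Real.sqrt (1 - v ^ 2))) v :=
    Real.hasDerivAt_arccos hv1 hv2
  have hval : (1 - 2 * (exp (y + t₀ * b) * exp (z + t₀ * c) /
      ((exp (x + t₀ * a) + exp (y + t₀ * b)) * (exp (x + t₀ * a) + exp (z + t₀ * c))))) = v := rfl
  have hcomp : HasDerivAt (fun t : ℝ => arccos (1 - 2 * (exp (y + t * b) * exp (z + t * c) /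
      ((exp (x + t * a) + exp (y + t * b)) * (exp (x + t * a) + exp (z + t * c))))))
      (-(1 / Real.sqrt (1 - v ^ 2)) * (-(2 * Q'))) t₀ := by
    have := HasDerivAt.comp t₀ (hval ▸ harc) hf
    exact this
  -- the sqrt simplification
  set Δ : ℝ := Real.sqrt (A * B * C * (A + B + C)) with hΔ_def
  have hΔΔ : Δ * Δ = A * B * C * (A + B + C) := by
    rw [← pow_two]
    exact Real.sq_sqrt (by positivity)
  have hΔpos : 0 < Δ := Real.sqrt_pos.mpr (by positivity)
  have hΔne : Δ ≠ 0 := ne_of_gt hΔpos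
  have hsq : Real.sqrt (1 - v ^ 2) = 2 * Δ / ((A + B) * (A + C)) := by
    have key : 1 - v ^ 2 = (2 * Δ / ((A + B) * (A + C))) ^ 2 := by
      rw [div_pow, mul_pow, show Δ ^ 2 = Δ * Δ from pow_two Δ, hΔΔ, hv_def]
      field_simp
      ring
    rw [key, Real.sqrt_sq (by positivity)]
  -- closed form of Q'
  have hQ'' : Q' = A * B * C * ((b - a) * (A + C) + (c - a) * (A + B)) /
      ((A + B) ^ 2 * (A + C) ^ 2) := by
    rw [hQ'_def]
    field_simp
    ring
  -- assemble the value equality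
  have hfrac : A * B * C / Δ = Δ / (A + B + C) := by
    rw [div_eq_div_iff hΔne hSne]
    linarith [hΔΔ]
  have step1 : -(1 / Real.sqrt (1 - v ^ 2)) * (-(2 * Q'))
      = A * B * C / Δ * (((b - a) * (A + C) + (c - a) * (A + B)) / ((A + B) * (A + C))) := by
    rw [hsq, hQ'']
    field_simp
  have step3 : Wt A B C * (b - a) + Wt A C B * (c - a)
      = Δ / (A + B + C) * (((b - a) * (A + C) + (c - a) * (A + B)) / ((A + B) * (A + C))) := by
    rw [Wt_eq hA0 hB0 hC0, Wt_eq hA0 hC0 hB0,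
      show A * C * B * (A + C + B) = A * B * C * (A + B + C) by ring,
      show A + C + B = A + B + C by ring, ← hΔ_def]
    field_simp
  have hvalue : Wt A B C * (b - a) + Wt A C B * (c - a)
      = -(1 / Real.sqrt (1 - v ^ 2)) * (-(2 * Q')) := by
    rw [step1, step3, hfrac]
  rw [hvalue]
  -- rewrite the function via ang_eq_arccos
  have heq : (fun t => ang (exp (x + t * a)) (exp (y + t * b)) (exp (z + t * c)))
      = fun t : ℝ => arccos (1 - 2 * (exp (y + t * b) * exp (z + t * c) /
        ((exp (x + t * a) + exp (y + t * b)) * (exp (x + t * a) + exp (z + t * c))))) := by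
    funext t
    exact ang_eq_arccos (exp_pos _) (exp_pos _) (exp_pos _)
  rw [heq]
  exact hcomp



abbrev V : Type := ℤ × ℤ

def n1 (v : V) : V := (v.1 + 1, v.2)
def n2 (v : V) : V := (v.1, v.2 + 1)
def n3 (v : V) : V := (v.1 - 1, v.2 + 1)
def n4 (v : V) : V := (v.1 - 1, v.2)
def n5 (v : V) : V := (v.1, v.2 - 1)
def n6 (v : V) : V := (v.1 + 1, v.2 - 1)

/-- rotation by 60 degrees in hex coordinates -/
def rot (d : V) : V := (-d.2, d.1 + d.2)

/-- the first common neighbor of the edge `p q` -/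
def z1 (p q : V) : V := p + rot (q - p)

variable (u : V → ℝ)

noncomputable def g (v : V) : ℝ := u (v.1 + 1, v.2) - u v

/-- interpolation of log-radii between `u` and its shift -/
noncomputable def EE (t : ℝ) (v : V) : ℝ := u v + t * g u v

/-- the symmetric edge weight -/
noncomputable def ew (p q : V) : ℝ :=
  ∫ t in (0:ℝ)..1,
    (Wt (exp (EE u t p)) (exp (EE u t q)) (exp (EE u t (z1 p q)))
      + Wt (exp (EE u t p)) (exp (EE u t q)) (exp (EE u t (z1 q p))))

lemma contW (p q r : V) :
    Continuous fun t => Wt (exp (EE u t p)) (exp (EE u t q)) (exp (EE u t r)) := by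
  unfold Wt EE
  have hp : Continuous fun t : ℝ => exp (u p + t * g u p) := by fun_prop
  have hq : Continuous fun t : ℝ => exp (u q + t * g u q) := by fun_prop
  have hr : Continuous fun t : ℝ => exp (u r + t * g u r) := by fun_prop
  apply Continuous.div
  · apply Continuous.sqrt
    apply Continuous.div
    · exact (hp.mul hq).mul hr
    · exact (hp.add hq).add hr
    · intro t
      positivity
  · exact hp.add hq
  · intro t
    positivity

lemma intW (p q r : V) :
    IntervalIntegrable (fun t => Wt (exp (EE u t p)) (exp (EE u t q)) (exp (EE u t r)))
      MeasureTheory.volume 0 1 :=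
  (contW u p q r).intervalIntegrable 0 1

lemma ew_symm (p q : V) : ew u p q = ew u q p := by
  unfold ew
  congr 1
  funext t
  rw [add_comm]
  congr 1 <;> exact Wt_symm

lemma ew_eq_add (p q : V) :
    ew u p q = (∫ t in (0:ℝ)..1, Wt (exp (EE u t p)) (exp (EE u t q)) (exp (EE u t (z1 p q))))
      + ∫ t in (0:ℝ)..1, Wt (exp (EE u t p)) (exp (EE u t q)) (exp (EE u t (z1 q p))) := by
  unfold ew
  exact intervalIntegral.integral_add (intW u p q _) (intW u p q _)

lemma ew_pos (p q : V) : 0 < ew u p q := by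
  unfold ew
  apply intervalIntegral.intervalIntegral_pos_of_pos_on
  · exact ((contW u p q _).add (contW u p q _)).intervalIntegrable 0 1
  · intro t _
    have h1 := Wt_pos (exp_pos (EE u t p)) (exp_pos (EE u t q)) (exp_pos (EE u t (z1 p q)))
    have h2 := Wt_pos (exp_pos (EE u t p)) (exp_pos (EE u t q)) (exp_pos (EE u t (z1 q p)))
    linarith
  · norm_num

lemma ew_le_one (p q : V) : ew u p q ≤ 1 := by
  unfold ew
  have hle : ∀ t ∈ Set.Icc (0:ℝ) 1,
      (Wt (exp (EE u t p)) (exp (EE u t q)) (exp (EE u t (z1 p q)))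
        + Wt (exp (EE u t p)) (exp (EE u t q)) (exp (EE u t (z1 q p)))) ≤ (1:ℝ) := by
    intro t _
    have h1 := Wt_le_half (exp_pos (EE u t p)) (exp_pos (EE u t q)) (exp_pos (EE u t (z1 p q)))
    have h2 := Wt_le_half (exp_pos (EE u t p)) (exp_pos (EE u t q)) (exp_pos (EE u t (z1 q p)))
    linarith
  have := intervalIntegral.integral_mono_on (μ := MeasureTheory.volume) (a := (0:ℝ)) (b := 1)
    (f := fun t => Wt (exp (EE u t p)) (exp (EE u t q)) (exp (EE u t (z1 p q)))
      + Wt (exp (EE u t p)) (exp (EE u t q)) (exp (EE u t (z1 q p))))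
    (g := fun _ => (1:ℝ)) (by norm_num)
    (((contW u p q _).add (contW u p q _)).intervalIntegrable 0 1)
    intervalIntegrable_const hle
  simpa using this

/-- common-neighbor computations -/
lemma z1_n1 (v : V) : z1 v (n1 v) = n2 v := by
  simp [z1, n1, n2, rot, Prod.ext_iff] <;> omega
lemma z1_n1' (v : V) : z1 (n1 v) v = n6 v := by
  simp [z1, n1, n6, rot, Prod.ext_iff] <;> omega
lemma z1_n2 (v : V) : z1 v (n2 v) = n3 v := by
  simp [z1, n2, n3, rot, Prod.ext_iff] <;> omega
lemma z1_n2' (v : V) : z1 (n2 v) v = n1 v := by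
  simp [z1, n2, n1, rot, Prod.ext_iff] <;> omega
lemma z1_n3 (v : V) : z1 v (n3 v) = n4 v := by
  simp [z1, n3, n4, rot, Prod.ext_iff] <;> omega
lemma z1_n3' (v : V) : z1 (n3 v) v = n2 v := by
  simp [z1, n3, n2, rot, Prod.ext_iff] <;> omega
lemma z1_n4 (v : V) : z1 v (n4 v) = n5 v := by
  simp [z1, n4, n5, rot, Prod.ext_iff] <;> omega
lemma z1_n4' (v : V) : z1 (n4 v) v = n3 v := by
  simp [z1, n4, n3, rot, Prod.ext_iff] <;> omega
lemma z1_n5 (v : V) : z1 v (n5 v) = n6 v := by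
  simp [z1, n5, n6, rot, Prod.ext_iff] <;> omega
lemma z1_n5' (v : V) : z1 (n5 v) v = n4 v := by
  simp [z1, n5, n4, rot, Prod.ext_iff] <;> omega
lemma z1_n6 (v : V) : z1 v (n6 v) = n1 v := by
  simp [z1, n6, n1, rot, Prod.ext_iff] <;> omega
lemma z1_n6' (v : V) : z1 (n6 v) v = n5 v := by
  simp [z1, n6, n5, rot, Prod.ext_iff] <;> omega


def nb (v : V) : Fin 6 → V := ![n1 v, n2 v, n3 v, n4 v, n5 v, n6 v]

@[simp] lemma nb_zero (v : V) : nb v 0 = n1 v := rfl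
@[simp] lemma nb_one (v : V) : nb v 1 = n2 v := rfl
@[simp] lemma nb_two (v : V) : nb v 2 = n3 v := rfl
@[simp] lemma nb_three (v : V) : nb v 3 = n4 v := rfl
@[simp] lemma nb_four (v : V) : nb v 4 = n5 v := rfl
@[simp] lemma nb_five (v : V) : nb v 5 = n6 v := rfl

lemma nb_z1 (v : V) (i : Fin 6) : z1 v (nb v i) = nb v (i + 1) := by
  fin_cases i
  · exact z1_n1 v
  · exact z1_n2 v
  · exact z1_n3 v
  · exact z1_n4 v
  · exact z1_n5 v
  · exact z1_n6 v

lemma nb_z1' (v : V) (i : Fin 6) : z1 (nb v i) v = nb v (i - 1) := by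
  fin_cases i
  · exact z1_n1' v
  · exact z1_n2' v
  · exact z1_n3' v
  · exact z1_n4' v
  · exact z1_n5' v
  · exact z1_n6' v

/-- one-triangle derivative along the interpolation -/
lemma tri_deriv (p q r : V) (t : ℝ) :
    HasDerivAt (fun s => ang (exp (EE u s p)) (exp (EE u s q)) (exp (EE u s r)))
      (Wt (exp (EE u t p)) (exp (EE u t q)) (exp (EE u t r)) * (g u q - g u p)
        + Wt (exp (EE u t p)) (exp (EE u t r)) (exp (EE u t q)) * (g u r - g u p)) t := by
  simpa [EE] using hasDerivAt_angExp (u p) (u q) (u r) (g u p) (g u q) (g u r) t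

lemma ew_nbr (v : V) (i : Fin 6) : ew u v (nb v i)
    = (∫ t in (0:ℝ)..1, Wt (exp (EE u t v)) (exp (EE u t (nb v i))) (exp (EE u t (nb v (i + 1)))))
    + ∫ t in (0:ℝ)..1, Wt (exp (EE u t v)) (exp (EE u t (nb v i))) (exp (EE u t (nb v (i - 1)))) := by
  rw [ew_eq_add, nb_z1, nb_z1']

/-- The discrete harmonicity of `D1 u = g u`. -/
lemma harmonic (hpack : ∀ m n : ℤ, packingEq (fun v => Real.exp (u v)) m n) (v : V) :
    ∑ i : Fin 6, ew u v (nb v i) * (g u (nb v i) - g u v) = 0 := by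
  set S : ℝ → ℝ := fun t =>
    ∑ i : Fin 6, ang (exp (EE u t v)) (exp (EE u t (nb v i))) (exp (EE u t (nb v (i + 1))))
    with hS_def
  set F : ℝ → ℝ := fun t =>
    ∑ i : Fin 6,
      (Wt (exp (EE u t v)) (exp (EE u t (nb v i))) (exp (EE u t (nb v (i + 1))))
          * (g u (nb v i) - g u v)
        + Wt (exp (EE u t v)) (exp (EE u t (nb v (i + 1)))) (exp (EE u t (nb v i)))
          * (g u (nb v (i + 1)) - g u v)) with hF_def
  have hS' : ∀ t ∈ Set.uIcc (0:ℝ) 1, HasDerivAt S (F t) t := by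
    intro t _
    exact HasDerivAt.fun_sum fun i _ => tri_deriv u v (nb v i) (nb v (i + 1)) t
  have hFcont : Continuous F := by
    apply continuous_finset_sum
    intro i _
    exact ((contW u v (nb v i) (nb v (i + 1))).mul continuous_const).add
      ((contW u v (nb v (i + 1)) (nb v i)).mul continuous_const)
  have hFTC : (∫ t in (0:ℝ)..1, F t) = S 1 - S 0 :=
    intervalIntegral.integral_eq_sub_of_hasDerivAt hS' (hFcont.intervalIntegrable 0 1)
  have hS0 : S 0 = 2 * π := by
    have h := hpack v.1 v.2
    unfold packingEq at h
    simp only [Prod.mk.eta] at h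
    simp only [hS_def]
    rw [Fin.sum_univ_six]
    norm_num
    simpa [EE, n1, n2, n3, n4, n5, n6] using h
  have hS1 : S 1 = 2 * π := by
    have h := hpack (v.1 + 1) v.2
    unfold packingEq at h
    simp only [Prod.mk.eta] at h
    have hEE : ∀ w : V, EE u 1 w = u (w.1 + 1, w.2) := by
      intro w
      simp [EE, g]
    simp only [hS_def]
    rw [Fin.sum_univ_six]
    simp only [show (0 + 1 : Fin 6) = 1 from rfl, show (1 + 1 : Fin 6) = 2 from rfl,
      show (2 + 1 : Fin 6) = 3 from rfl, show (3 + 1 : Fin 6) = 4 from rfl,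
      show (4 + 1 : Fin 6) = 5 from rfl, show (5 + 1 : Fin 6) = 0 from rfl]
    norm_num
    simp only [hEE, n1, n2, n3, n4, n5, n6]
    norm_num
    convert h using 5 <;> norm_num <;> ring_nf
  have hint : (∫ t in (0:ℝ)..1, F t) = 0 := by rw [hFTC, hS0, hS1]; ring
  have hsplit : (∫ t in (0:ℝ)..1, F t)
      = ∑ i : Fin 6, ew u v (nb v i) * (g u (nb v i) - g u v) := by
    simp only [hF_def]
    rw [intervalIntegral.integral_finset_sum (fun i _ =>
      (((contW u v (nb v i) (nb v (i + 1))).fun_mul continuous_const).fun_add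
        ((contW u v (nb v (i + 1)) (nb v i)).fun_mul continuous_const)).intervalIntegrable 0 1)]
    have hper : ∀ i : Fin 6,
        (∫ t in (0:ℝ)..1,
          (Wt (exp (EE u t v)) (exp (EE u t (nb v i))) (exp (EE u t (nb v (i + 1))))
              * (g u (nb v i) - g u v)
            + Wt (exp (EE u t v)) (exp (EE u t (nb v (i + 1)))) (exp (EE u t (nb v i)))
              * (g u (nb v (i + 1)) - g u v)))
        = (∫ t in (0:ℝ)..1,
            Wt (exp (EE u t v)) (exp (EE u t (nb v i))) (exp (EE u t (nb v (i + 1)))))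
            * (g u (nb v i) - g u v)
          + (∫ t in (0:ℝ)..1,
            Wt (exp (EE u t v)) (exp (EE u t (nb v (i + 1)))) (exp (EE u t (nb v i))))
            * (g u (nb v (i + 1)) - g u v) := by
      intro i
      rw [intervalIntegral.integral_add
        (((contW u v (nb v i) (nb v (i + 1))).fun_mul continuous_const).intervalIntegrable 0 1)
        (((contW u v (nb v (i + 1)) (nb v i)).fun_mul continuous_const).intervalIntegrable 0 1),
        intervalIntegral.integral_mul_const, intervalIntegral.integral_mul_const]
    simp only [hper]
    rw [Finset.sum_add_distrib]
    -- reindex the second sum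
    have hre : (∑ i : Fin 6,
        (∫ t in (0:ℝ)..1,
          Wt (exp (EE u t v)) (exp (EE u t (nb v (i + 1)))) (exp (EE u t (nb v i))))
          * (g u (nb v (i + 1)) - g u v))
        = ∑ i : Fin 6,
        (∫ t in (0:ℝ)..1,
          Wt (exp (EE u t v)) (exp (EE u t (nb v i))) (exp (EE u t (nb v (i - 1)))))
          * (g u (nb v i) - g u v) := by
      apply Fintype.sum_equiv (Equiv.addRight (1 : Fin 6))
      intro i
      simp only [Equiv.coe_addRight]
      rw [show (i + 1 - 1 : Fin 6) = i by simp]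
    rw [hre, ← Finset.sum_add_distrib]
    apply Finset.sum_congr rfl
    intro i _
    rw [ew_nbr]
    ring
  rw [← hsplit, hint]

def dir : Fin 6 → V := ![(1, 0), (0, 1), (-1, 1), (-1, 0), (0, -1), (1, -1)]

lemma nb_add (v : V) (i : Fin 6) : nb v i = v + dir i := by
  fin_cases i
  · show n1 v = v + (1, 0); simp [n1, Prod.ext_iff] <;> omega
  · show n2 v = v + (0, 1); simp [n2, Prod.ext_iff] <;> omega
  · show n3 v = v + (-1, 1); simp [n3, Prod.ext_iff] <;> omega
  · show n4 v = v + (-1, 0); simp [n4, Prod.ext_iff] <;> omega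
  · show n5 v = v + (0, -1); simp [n5, Prod.ext_iff] <;> omega
  · show n6 v = v + (1, -1); simp [n6, Prod.ext_iff] <;> omega

lemma nb_opp (v : V) (i : Fin 6) : nb (nb v i) (i + 3) = v := by
  fin_cases i
  · show n4 (n1 v) = v; simp [n1, n4, Prod.ext_iff] <;> omega
  · show n5 (n2 v) = v; simp [n2, n5, Prod.ext_iff] <;> omega
  · show n6 (n3 v) = v; simp [n3, n6, Prod.ext_iff] <;> omega
  · show n1 (n4 v) = v; simp [n4, n1, Prod.ext_iff] <;> omega
  · show n2 (n5 v) = v; simp [n5, n2, Prod.ext_iff] <;> omega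
  · show n3 (n6 v) = v; simp [n6, n3, Prod.ext_iff] <;> omega

def rho (v : V) : ℕ := max v.1.natAbs v.2.natAbs

lemma rho_nb_le (v : V) (i : Fin 6) : rho (nb v i) ≤ rho v + 1 := by
  fin_cases i
  · show rho (n1 v) ≤ rho v + 1; simp [n1, rho] <;> omega
  · show rho (n2 v) ≤ rho v + 1; simp [n2, rho] <;> omega
  · show rho (n3 v) ≤ rho v + 1; simp [n3, rho] <;> omega
  · show rho (n4 v) ≤ rho v + 1; simp [n4, rho] <;> omega
  · show rho (n5 v) ≤ rho v + 1; simp [n5, rho] <;> omega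
  · show rho (n6 v) ≤ rho v + 1; simp [n6, rho] <;> omega

lemma rho_le_nb (v : V) (i : Fin 6) : rho v ≤ rho (nb v i) + 1 := by
  fin_cases i
  · show rho v ≤ rho (n1 v) + 1; simp [n1, rho] <;> omega
  · show rho v ≤ rho (n2 v) + 1; simp [n2, rho] <;> omega
  · show rho v ≤ rho (n3 v) + 1; simp [n3, rho] <;> omega
  · show rho v ≤ rho (n4 v) + 1; simp [n4, rho] <;> omega
  · show rho v ≤ rho (n5 v) + 1; simp [n5, rho] <;> omega
  · show rho v ≤ rho (n6 v) + 1; simp [n6, rho] <;> omega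

lemma rho_add_dir_le (v : V) (i : Fin 6) : rho (v + dir i) ≤ rho v + 1 := by
  rw [← nb_add]; exact rho_nb_le v i

lemma rho_sub_dir_le (v : V) (i : Fin 6) : rho (v - dir i) ≤ rho v + 1 := by
  fin_cases i
  · show rho (v - (1, 0)) ≤ rho v + 1; simp [rho, Prod.fst_sub, Prod.snd_sub] <;> omega
  · show rho (v - (0, 1)) ≤ rho v + 1; simp [rho, Prod.fst_sub, Prod.snd_sub] <;> omega
  · show rho (v - (-1, 1)) ≤ rho v + 1; simp [rho, Prod.fst_sub, Prod.snd_sub] <;> omega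
  · show rho (v - (-1, 0)) ≤ rho v + 1; simp [rho, Prod.fst_sub, Prod.snd_sub] <;> omega
  · show rho (v - (0, -1)) ≤ rho v + 1; simp [rho, Prod.fst_sub, Prod.snd_sub] <;> omega
  · show rho (v - (1, -1)) ≤ rho v + 1; simp [rho, Prod.fst_sub, Prod.snd_sub] <;> omega

noncomputable def box (M : ℕ) : Finset V := Finset.Icc (-(M:ℤ)) M ×ˢ Finset.Icc (-(M:ℤ)) M

lemma mem_box {M : ℕ} {v : V} : v ∈ box M ↔ rho v ≤ M := by
  simp only [box, Finset.mem_product, Finset.mem_Icc, rho]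
  omega

lemma card_box (M : ℕ) : (box M).card = (2 * M + 1) ^ 2 := by
  have h : (Finset.Icc (-(M:ℤ)) M).card = 2 * M + 1 := by
    rw [Int.card_Icc]
    omega
  rw [box, Finset.card_product, h]
  ring

lemma card_shell (M r : ℕ) (hr : 1 ≤ r) :
    ((box M).filter (fun v => rho v = r)).card ≤ 12 * r := by
  have hsub : (box M).filter (fun v => rho v = r) ⊆ box r \ box (r - 1) := by
    intro v hv
    rw [Finset.mem_filter] at hv
    rw [Finset.mem_sdiff, mem_box, mem_box]
    omega
  calc ((box M).filter (fun v => rho v = r)).card ≤ (box r \ box (r - 1)).card :=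
        Finset.card_le_card hsub
    _ = (box r).card - (box (r - 1)).card := by
        rw [Finset.card_sdiff_of_subset]
        intro v hv
        rw [mem_box] at hv ⊢
        omega
    _ ≤ 12 * r := by
        rw [card_box, card_box]
        obtain ⟨s, rfl⟩ : ∃ s, r = s + 1 := ⟨r - 1, by omega⟩
        have h1 : (2 * (s + 1) + 1) ^ 2 = (2 * (s + 1 - 1) + 1) ^ 2 + (8 * s + 8) := by
          have h3 : s + 1 - 1 = s := by omega
          rw [h3]
          ring
        rw [h1, Nat.add_sub_cancel_left]
        omega

/-- partial sums of the harmonic series -/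
noncomputable def HH (n : ℕ) : ℝ := ∑ j ∈ Finset.range n, (1:ℝ) / (j + 1)

lemma HH_succ (n : ℕ) : HH (n + 1) = HH n + 1 / (n + 1) := Finset.sum_range_succ _ n

lemma HH_mono : Monotone HH := by
  intro a b hab
  apply Finset.sum_le_sum_of_subset_of_nonneg (Finset.range_subset_range.mpr hab)
  intro i _ _
  positivity

lemma HH_strict {K N : ℕ} (h : K < N) : HH K < HH N := by
  have : HH (K + 1) ≤ HH N := HH_mono h
  rw [HH_succ] at this
  have : (0:ℝ) < 1 / (K + 1) := by positivity
  linarith [HH_mono (Nat.le_of_lt_succ (Nat.lt_succ_of_lt h)), HH_succ K,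
    HH_mono (show K + 1 ≤ N from h)]

lemma HH_tendsto : Filter.Tendsto HH Filter.atTop Filter.atTop := by
  have := Real.tendsto_sum_range_one_div_nat_succ_atTop
  exact this

lemma HH_nonneg (n : ℕ) : 0 ≤ HH n := by
  unfold HH
  positivity


lemma eps_bound {HN HK ε : ℝ} (hε : 0 < ε) (hN1 : 2 * HK ≤ HN) (hN2 : 288 / ε + 1 ≤ HN)
    (hHK : 0 ≤ HK) : 72 * HN / (HN - HK) ^ 2 ≤ ε := by
  have hHN : 0 < HN := by
    have : (0:ℝ) < 288 / ε + 1 := by positivity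
    linarith
  have hD2 : HN / 2 ≤ HN - HK := by linarith
  have hDpos : 0 < HN - HK := by linarith
  rw [div_le_iff₀ (by positivity), pow_two]
  have hεHH : 288 + ε ≤ ε * HN := by
    have hmul := mul_le_mul_of_nonneg_left hN2 hε.le
    have heps : ε * (288 / ε + 1) = 288 + ε := by field_simp
    rw [heps] at hmul
    linarith
  have hDsq : HN / 2 * (HN / 2) ≤ (HN - HK) * (HN - HK) :=
    mul_le_mul hD2 hD2 (by positivity) (le_trans (by positivity) hD2)
  nlinarith [mul_le_mul_of_nonneg_left hDsq hε.le,
    mul_le_mul_of_nonneg_right hεHH (le_of_lt hHN)]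

set_option maxHeartbeats 2000000 in
theorem liouville (c : V → Fin 6 → ℝ) (h : V → ℝ)
    (hsym : ∀ v i, c v i = c (nb v i) (i + 3))
    (hle : ∀ v i, c v i ≤ 1)
    (hpos : ∀ v i, 0 < c v i)
    (hharm : ∀ v, ∑ i : Fin 6, c v i * (h (nb v i) - h v) = 0)
    (hge : ∀ v, 1 ≤ h v) (v₀ : V) (i₀ : Fin 6) : h (nb v₀ i₀) = h v₀ := by
  set w₀ := nb v₀ i₀ with hw₀def
  have hv₀pos : (0:ℝ) < h v₀ := lt_of_lt_of_le one_pos (hge v₀)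
  have hw₀pos : (0:ℝ) < h w₀ := lt_of_lt_of_le one_pos (hge w₀)
  set X : ℝ := c v₀ i₀ * (h v₀ * h w₀ * (1 / h w₀ - 1 / h v₀) ^ 2) with hXdef
  have hXnonneg : 0 ≤ X := by
    have := (hpos v₀ i₀).le
    positivity
  have key : ∀ ε : ℝ, 0 < ε → X ≤ ε := by
    intro ε hε
    set K : ℕ := rho v₀ + 1 with hKdef
    obtain ⟨N, hN1, hN2⟩ : ∃ N, 2 * HH K ≤ HH N ∧ 288 / ε + 1 ≤ HH N := by
      obtain ⟨N, hN⟩ := (HH_tendsto.eventually_ge_atTop (max (2 * HH K) (288 / ε + 1))).exists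
      exact ⟨N, le_trans (le_max_left _ _) hN, le_trans (le_max_right _ _) hN⟩
    have hHNpos : 0 < HH N := by
      have : (0:ℝ) < 288 / ε + 1 := by positivity
      linarith
    have hKN : K < N := by
      by_contra hc
      push_neg at hc
      have := HH_mono hc
      have hK0 := HH_nonneg K
      linarith
    set D : ℝ := HH N - HH K with hDdef
    have hDpos : 0 < D := sub_pos.mpr (HH_strict hKN)
    set M : ℕ := N + 1 with hMdef
    set f : ℕ → ℝ := fun r => if r ≤ K then 1 else if N ≤ r then 0 else (HH N - HH r) / D
      with hfdef
    set ψ : V → ℝ := fun v => f (rho v) with hψdef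
    set φ : V → ℝ := fun v => ψ v ^ 2 / h v with hφdef
    have hf0 : ∀ r, 0 ≤ f r := by
      intro r
      rw [hfdef]
      dsimp only
      split_ifs with h1 h2
      · norm_num
      · exact le_refl 0
      · have hr : r ≤ N := by omega
        have := HH_mono hr
        exact div_nonneg (by linarith) hDpos.le
    have hf1 : ∀ r, f r ≤ 1 := by
      intro r
      rw [hfdef]
      dsimp only
      split_ifs with h1 h2
      · exact le_refl 1
      · norm_num
      · rw [div_le_one hDpos]
        have : K ≤ r := by omega
        have := HH_mono this
        rw [hDdef]
        linarith
    have hfK : ∀ r, r ≤ K → f r = 1 := by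
      intro r hr
      rw [hfdef]
      exact if_pos hr
    have hfN : ∀ r, N ≤ r → f r = 0 := by
      intro r hr
      rw [hfdef]
      dsimp only
      rw [if_neg (by omega), if_pos hr]
    have hstep : ∀ r, 0 ≤ f r - f (r + 1) ∧
        f r - f (r + 1) ≤ (if K ≤ r ∧ r < N then 1 / (D * (r + 1)) else 0) := by
      intro r
      rcases le_or_gt (r + 1) K with h1 | h1
      · rw [hfK r (by omega), hfK _ h1, if_neg (by omega)]
        norm_num
      · rcases le_or_gt N r with h2 | h2
        · rw [hfN r h2, hfN _ (by omega), if_neg (by omega)]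
          norm_num
        · have hKr : K ≤ r := by omega
          rw [if_pos ⟨hKr, h2⟩]
          have hfr : f r = (HH N - HH r) / D := by
            rw [hfdef]
            dsimp only
            split_ifs with ha hb
            · have : r = K := by omega
              subst this
              rw [hDdef]
              exact (div_self hDpos.ne').symm
            · omega
            · rfl
          have hfr1 : f (r + 1) = (HH N - HH (r + 1)) / D := by
            rw [hfdef]
            dsimp only
            rw [if_neg (by omega)]
            split_ifs with hb
            · have : r + 1 = N := by omega
              rw [this]
              simp
            · rfl
          rw [hfr, hfr1, div_sub_div_same, HH_succ]
          constructor
          · have : HH N - HH r - (HH N - (HH r + 1 / (r + 1))) = 1 / (r + 1) := by ring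
            rw [this]
            positivity
          · have : HH N - HH r - (HH N - (HH r + 1 / (r + 1))) = 1 / (r + 1) := by ring
            rw [this, div_div]
            rw [mul_comm]
    set G : ℕ → ℝ := fun r => if K ≤ r ∧ r ≤ N then (1 / (D * r)) ^ 2 else 0 with hGdef
    have hG0 : ∀ r, 0 ≤ G r := by
      intro r
      rw [hGdef]
      dsimp only
      split_ifs
      · positivity
      · exact le_refl 0
    have hinc : ∀ v (i : Fin 6), (ψ (nb v i) - ψ v) ^ 2 ≤ G (rho v) := by
      intro v i
      have hb1 := rho_nb_le v i
      have hb2 := rho_le_nb v i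
      rw [hψdef]
      dsimp only
      rcases lt_trichotomy (rho (nb v i)) (rho v) with hlt | heq | hgt
      · -- rho v = rho (nb v i) + 1
        set s := rho (nb v i) with hs
        have hr : rho v = s + 1 := by omega
        rw [hr]
        have hst := hstep s
        rcases em (K ≤ s ∧ s < N) with hg | hg
        · rw [if_pos hg] at hst
          have hsq : (f s - f (s + 1)) ^ 2 ≤ (1 / (D * (s + 1))) ^ 2 :=
            pow_le_pow_left₀ hst.1 hst.2 2
          rw [hGdef]
          dsimp only
          rw [if_pos ⟨by omega, by omega⟩]
          have hcast : ((s + 1 : ℕ) : ℝ) = (s : ℝ) + 1 := by push_cast; ring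
          rw [hcast]
          exact hsq
        · rw [if_neg hg] at hst
          have hz : f s - f (s + 1) = 0 := le_antisymm hst.2 hst.1
          rw [hz]
          simpa using hG0 (s + 1)
      · rw [heq]
        simpa using hG0 (rho v)
      · -- rho (nb v i) = rho v + 1
        set r := rho v with hrr
        have hs : rho (nb v i) = r + 1 := by omega
        rw [hs]
        have hst := hstep r
        rcases em (K ≤ r ∧ r < N) with hg | hg
        · rw [if_pos hg] at hst
          have hr1 : 1 ≤ r := by omega
          have hsq : (f (r + 1) - f r) ^ 2 ≤ (1 / (D * (r + 1))) ^ 2 := by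
            have : (f (r + 1) - f r) ^ 2 = (f r - f (r + 1)) ^ 2 := by ring
            rw [this]
            exact pow_le_pow_left₀ hst.1 hst.2 2
          rw [hGdef]
          dsimp only
          rw [if_pos ⟨hg.1, by omega⟩]
          refine le_trans hsq ?_
          have hrpos : (0:ℝ) < r := by exact_mod_cast hr1
          apply pow_le_pow_left₀ (by positivity)
          apply one_div_le_one_div_of_le (by positivity)
          have : ((r:ℝ)) ≤ ((r:ℝ) + 1) := by linarith
          nlinarith
        · rw [if_neg hg] at hst
          have hz : f r - f (r + 1) = 0 := le_antisymm hst.2 hst.1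
          have : f (r + 1) - f r = 0 := by linarith
          rw [this]
          simpa using hG0 r
    -- the rearrangement lemma
    have L1 : ∀ p : V → ℝ, (∀ w, N ≤ rho w → p w = 0) →
        (∑ v ∈ box M, ∑ i : Fin 6, c v i * (h (nb v i) - h v) * p (nb v i))
        = -∑ v ∈ box M, ∑ i : Fin 6, c v i * (h (nb v i) - h v) * p v := by
      intro p hp
      rw [Finset.sum_comm]
      have per : ∀ i : Fin 6, (∑ v ∈ box M, c v i * (h (nb v i) - h v) * p (nb v i))
          = ∑ w ∈ box M, c w (i + 3) * (h w - h (nb w (i + 3))) * p w := by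
        intro i
        have e1 : ∀ v : V, c v i * (h (nb v i) - h v) * p (nb v i)
            = (fun w : V => c w (i + 3) * (h w - h (nb w (i + 3))) * p w) (v + dir i) := by
          intro v
          rw [← nb_add]
          dsimp only
          rw [← hsym v i, nb_opp]
        calc (∑ v ∈ box M, c v i * (h (nb v i) - h v) * p (nb v i))
            = ∑ v ∈ box M,
              (fun w : V => c w (i + 3) * (h w - h (nb w (i + 3))) * p w) (v + dir i) :=
              Finset.sum_congr rfl fun v _ => e1 v
          _ = ∑ w ∈ (box M).map (addRightEmbedding (dir i)),
              c w (i + 3) * (h w - h (nb w (i + 3))) * p w := by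
              rw [Finset.sum_map]
              rfl
          _ = ∑ w ∈ box (M + 1), c w (i + 3) * (h w - h (nb w (i + 3))) * p w := by
              apply Finset.sum_subset
              · intro w hw
                simp only [Finset.mem_map, addRightEmbedding] at hw
                obtain ⟨v, hv, hvw⟩ := hw
                simp only [Function.Embedding.coeFn_mk] at hvw
                rw [mem_box] at hv ⊢
                have := rho_add_dir_le v i
                rw [hvw] at this
                omega
              · intro w _ hnw
                have hNw : N ≤ rho w := by
                  by_contra hcon
                  push_neg at hcon
                  apply hnw
                  simp only [Finset.mem_map, addRightEmbedding]
                  refine ⟨w - dir i, ?_, ?_⟩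
                  · rw [mem_box]
                    have := rho_sub_dir_le w i
                    omega
                  · simp only [Function.Embedding.coeFn_mk]
                    abel
                rw [hp w hNw]
                ring
          _ = ∑ w ∈ box M, c w (i + 3) * (h w - h (nb w (i + 3))) * p w := by
              symm
              apply Finset.sum_subset
              · intro w hw
                rw [mem_box] at hw ⊢
                omega
              · intro w hw hnw
                rw [mem_box] at hnw
                have hNw : N ≤ rho w := by omega
                rw [hp w hNw]
                ring
      rw [Finset.sum_congr rfl fun i _ => per i]
      have hre : (∑ i : Fin 6, ∑ w ∈ box M, c w (i + 3) * (h w - h (nb w (i + 3))) * p w)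
          = ∑ i : Fin 6, ∑ w ∈ box M, c w i * (h w - h (nb w i)) * p w :=
        Fintype.sum_equiv (Equiv.addRight (3 : Fin 6)) _ _ fun i => rfl
      rw [hre, Finset.sum_comm]
      rw [← Finset.sum_neg_distrib]
      apply Finset.sum_congr rfl
      intro v _
      rw [← Finset.sum_neg_distrib]
      apply Finset.sum_congr rfl
      intro i _
      ring
    have T0 : ∀ p : V → ℝ,
        (∑ v ∈ box M, ∑ i : Fin 6, c v i * (h (nb v i) - h v) * p v) = 0 := by
      intro p
      apply Finset.sum_eq_zero
      intro v _
      have : (∑ i : Fin 6, c v i * (h (nb v i) - h v) * p v)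
          = (∑ i : Fin 6, c v i * (h (nb v i) - h v)) * p v := by
        rw [Finset.sum_mul]
      rw [this, hharm v, zero_mul]
    have hφ0 : ∀ w, N ≤ rho w → φ w = 0 := by
      intro w hw
      rw [hφdef]
      dsimp only
      rw [hψdef]
      dsimp only
      rw [hfN _ hw]
      simp
    have E0 : (∑ v ∈ box M, ∑ i : Fin 6,
        c v i * (h (nb v i) - h v) * (φ (nb v i) - φ v)) = 0 := by
      have expand : ∀ v (i : Fin 6), c v i * (h (nb v i) - h v) * (φ (nb v i) - φ v)
          = c v i * (h (nb v i) - h v) * φ (nb v i) - c v i * (h (nb v i) - h v) * φ v := by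
        intros
        ring
      simp_rw [expand, Finset.sum_sub_distrib]
      rw [L1 φ hφ0, T0 φ]
      ring
    have Emain : (∑ v ∈ box M, ∑ i : Fin 6,
        c v i * (h v * h (nb v i) * (ψ (nb v i) / h (nb v i) - ψ v / h v) ^ 2))
        = ∑ v ∈ box M, ∑ i : Fin 6, c v i * (ψ (nb v i) - ψ v) ^ 2 := by
      have point : ∀ v (i : Fin 6),
          c v i * (h v * h (nb v i) * (ψ (nb v i) / h (nb v i) - ψ v / h v) ^ 2)
          = c v i * (ψ (nb v i) - ψ v) ^ 2
            - c v i * (h (nb v i) - h v) * (φ (nb v i) - φ v) := by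
        intro v i
        have h1 : h v ≠ 0 := ne_of_gt (lt_of_lt_of_le one_pos (hge v))
        have h2 : h (nb v i) ≠ 0 := ne_of_gt (lt_of_lt_of_le one_pos (hge (nb v i)))
        rw [hφdef]
        dsimp only
        field_simp
        ring
      simp_rw [point, Finset.sum_sub_distrib]
      rw [E0]
      ring
    -- lower bound
    have hψv₀ : ψ v₀ = 1 := by
      rw [hψdef]
      exact hfK _ (by omega)
    have hψw₀ : ψ w₀ = 1 := by
      rw [hψdef]
      dsimp only
      apply hfK
      have := rho_nb_le v₀ i₀
      rw [← hw₀def] at this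
      omega
    have hv₀mem : v₀ ∈ box M := by
      rw [mem_box]
      omega
    have inner_nonneg : ∀ v (i : Fin 6),
        0 ≤ c v i * (h v * h (nb v i) * (ψ (nb v i) / h (nb v i) - ψ v / h v) ^ 2) := by
      intro v i
      have := (hpos v i).le
      have ha := lt_of_lt_of_le one_pos (hge v)
      have hb := lt_of_lt_of_le one_pos (hge (nb v i))
      positivity
    have lower : X ≤ ∑ v ∈ box M, ∑ i : Fin 6,
        c v i * (h v * h (nb v i) * (ψ (nb v i) / h (nb v i) - ψ v / h v) ^ 2) := by
      have t1 : X ≤ ∑ i : Fin 6,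
          c v₀ i * (h v₀ * h (nb v₀ i) * (ψ (nb v₀ i) / h (nb v₀ i) - ψ v₀ / h v₀) ^ 2) := by
        have heqX : X = c v₀ i₀ *
            (h v₀ * h (nb v₀ i₀) * (ψ (nb v₀ i₀) / h (nb v₀ i₀) - ψ v₀ / h v₀) ^ 2) := by
          rw [hXdef, ← hw₀def, hψv₀, hψw₀]
        rw [heqX]
        exact Finset.single_le_sum (fun i _ => inner_nonneg v₀ i) (Finset.mem_univ i₀)
      refine le_trans t1 ?_
      exact Finset.single_le_sum
        (fun v _ => Finset.sum_nonneg fun i _ => inner_nonneg v i) hv₀mem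
    -- upper bound
    have up1 : (∑ v ∈ box M, ∑ i : Fin 6, c v i * (ψ (nb v i) - ψ v) ^ 2)
        ≤ ∑ v ∈ box M, (6:ℝ) * G (rho v) := by
      apply Finset.sum_le_sum
      intro v _
      calc (∑ i : Fin 6, c v i * (ψ (nb v i) - ψ v) ^ 2)
          ≤ ∑ _i : Fin 6, G (rho v) := by
            apply Finset.sum_le_sum
            intro i _
            calc c v i * (ψ (nb v i) - ψ v) ^ 2 ≤ (ψ (nb v i) - ψ v) ^ 2 :=
                mul_le_of_le_one_left (sq_nonneg _) (hle v i)
              _ ≤ G (rho v) := hinc v i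
        _ = (6:ℝ) * G (rho v) := by
            rw [Finset.sum_const]
            simp
    have up2 : (∑ v ∈ box M, (6:ℝ) * G (rho v)) ≤ 72 * HH N / D ^ 2 := by
      rw [← Finset.mul_sum]
      have fib : (∑ v ∈ box M, G (rho v))
          = ∑ r ∈ Finset.range (M + 1), ∑ v ∈ (box M).filter (fun v => rho v = r), G (rho v) :=
        (Finset.sum_fiberwise_of_maps_to
          (fun v hv => Finset.mem_range.mpr (by rw [mem_box] at hv; omega)) _).symm
      have step : (∑ v ∈ box M, G (rho v)) ≤ (12 / D ^ 2) * HH N := by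
        rw [fib]
        have bnd : ∀ r ∈ Finset.range (M + 1),
            (∑ v ∈ (box M).filter (fun v => rho v = r), G (rho v))
            ≤ (12 / D ^ 2) * (if 1 ≤ r ∧ r ≤ N then (1:ℝ) / r else 0) := by
          intro r _
          have hconst : (∑ v ∈ (box M).filter (fun v => rho v = r), G (rho v))
              = ((box M).filter (fun v => rho v = r)).card * G r := by
            rw [Finset.sum_congr rfl fun v hv => by rw [(Finset.mem_filter.mp hv).2]]
            rw [Finset.sum_const, nsmul_eq_mul]
          rw [hconst]
          rcases em (K ≤ r ∧ r ≤ N) with hg | hg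
          · have hr1 : 1 ≤ r := by omega
            have hcard : (((box M).filter (fun v => rho v = r)).card : ℝ) ≤ 12 * r := by
              exact_mod_cast card_shell M r hr1
            have hrpos : (0:ℝ) < r := by exact_mod_cast hr1
            rw [hGdef]
            dsimp only
            rw [if_pos hg, if_pos ⟨hr1, hg.2⟩]
            calc (((box M).filter (fun v => rho v = r)).card : ℝ) * (1 / (D * r)) ^ 2
                ≤ 12 * r * (1 / (D * r)) ^ 2 :=
                  mul_le_mul_of_nonneg_right hcard (by positivity)
              _ = 12 / D ^ 2 * (1 / r) := by
                  field_simp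
          · rw [hGdef]
            dsimp only
            rw [if_neg hg, mul_zero]
            split_ifs with hg2
            · positivity
            · simp
        calc (∑ r ∈ Finset.range (M + 1),
            ∑ v ∈ (box M).filter (fun v => rho v = r), G (rho v))
            ≤ ∑ r ∈ Finset.range (M + 1),
              (12 / D ^ 2) * (if 1 ≤ r ∧ r ≤ N then (1:ℝ) / r else 0) :=
              Finset.sum_le_sum bnd
          _ = (12 / D ^ 2) * ∑ r ∈ Finset.range (M + 1),
              (if 1 ≤ r ∧ r ≤ N then (1:ℝ) / r else 0) := by
              rw [Finset.mul_sum]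
          _ ≤ (12 / D ^ 2) * HH N := by
              apply mul_le_mul_of_nonneg_left _ (by positivity)
              have hNM : N + 1 ≤ M + 1 := by omega
              rw [← Finset.sum_subset (Finset.range_subset_range.mpr hNM)
                (fun r _ hr => by
                  rw [if_neg]
                  rw [Finset.mem_range] at hr
                  push_neg at hr
                  omega)]
              rw [Finset.sum_range_succ']
              have hz : (if 1 ≤ 0 ∧ 0 ≤ N then (1:ℝ) / (0:ℕ) else 0) = 0 := by
                rw [if_neg]
                omega
              rw [hz, add_zero]
              apply le_of_eq
              apply Finset.sum_congr rfl
              intro i hi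
              rw [Finset.mem_range] at hi
              rw [if_pos ⟨by omega, by omega⟩]
              push_cast
              rfl
      calc (6:ℝ) * ∑ v ∈ box M, G (rho v) ≤ 6 * ((12 / D ^ 2) * HH N) :=
            mul_le_mul_of_nonneg_left step (by norm_num)
        _ = 72 * HH N / D ^ 2 := by ring
    -- combine
    have final : X ≤ 72 * HH N / D ^ 2 := by
      calc X ≤ _ := lower
        _ = _ := Emain
        _ ≤ ∑ v ∈ box M, (6:ℝ) * G (rho v) := up1
        _ ≤ 72 * HH N / D ^ 2 := up2
    have hfin2 : 72 * HH N / D ^ 2 ≤ ε := by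
      rw [hDdef]
      exact eps_bound hε hN1 hN2 (HH_nonneg K)
    linarith
  -- conclude from X ≤ ε for all ε > 0
  have hX0 : X = 0 := by
    by_contra hc
    have hXpos : 0 < X := lt_of_le_of_ne hXnonneg (Ne.symm hc)
    have := key (X / 2) (by linarith)
    linarith
  have hc0 := hpos v₀ i₀
  have hsq0 : (1 / h w₀ - 1 / h v₀) ^ 2 = 0 := by
    by_contra hc
    have h1 : 0 < (1 / h w₀ - 1 / h v₀) ^ 2 :=
      lt_of_le_of_ne (sq_nonneg _) (Ne.symm hc)
    have : 0 < X := by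
      rw [hXdef]
      positivity
    linarith
  have h2 : 1 / h w₀ = 1 / h v₀ := by
    have := pow_eq_zero_iff (n := 2) (by norm_num) |>.mp hsq0
    linarith
  have hne1 : h w₀ ≠ 0 := ne_of_gt hw₀pos
  have hne2 : h v₀ ≠ 0 := ne_of_gt hv₀pos
  field_simp at h2
  linarith

/-- one-dimensional constancy from a step identity -/
lemma const1d (F : ℤ → ℝ) (h : ∀ n : ℤ, F (n + 1) = F n) : ∀ n : ℤ, F n = F 0 := by
  intro n
  induction n using Int.induction_on with
  | zero => rfl
  | succ k ih => rw [h (k : ℤ)]; exact ih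
  | pred k ih =>
      have hh := h (-(k : ℤ) - 1)
      rw [show (-(k:ℤ) - 1 + 1) = -(k:ℤ) by ring] at hh
      rw [← hh]
      exact ih

/-- linear growth from a constant step -/
lemma lin1d (F : ℤ → ℝ) (k : ℝ) (h : ∀ n : ℤ, F (n + 1) = F n + k) :
    ∀ n : ℤ, F n = F 0 + k * n := by
  intro n
  induction n using Int.induction_on with
  | zero => simp
  | succ m ih =>
      rw [h (m : ℤ), ih]
      push_cast
      ring
  | pred m ih =>
      have hh := h (-(m : ℤ) - 1)
      rw [show (-(m:ℤ) - 1 + 1) = -(m:ℤ) by ring] at hh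
      have : F (-(m:ℤ) - 1) = F (-(m:ℤ)) - k := by linarith
      rw [this, ih]
      push_cast
      ring


end DoyleAux

open DoyleAux in
/-- Main rigidity theorem: if the discrete conformal factors `u` of a locally univalent
circle packing of the hexagonal lattice satisfy `inf D1 u > -∞`, then both difference
operators of `u` are constant, i.e. the radii are `r_{0,0}·e^{k1 m}·e^{k2 n}` and the
packing is a regular hexagonal packing or a Doyle spiral. -/
theorem stmt_18 (u : ℤ × ℤ → ℝ)
    (hpack : ∀ m n : ℤ, packingEq (fun v => Real.exp (u v)) m n)
    (hbelow : ∃ c : ℝ, ∀ m n : ℤ, c ≤ u (m + 1, n) - u (m, n)) :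
    ∃ k1 k2 : ℝ, (∀ m n : ℤ, u (m + 1, n) - u (m, n) = k1) ∧
      (∀ m n : ℤ, u (m, n + 1) - u (m, n) = k2) ∧
      ∀ m n : ℤ, Real.exp (u (m, n)) =
        Real.exp (u (0, 0)) * Real.exp (k1 * m) * Real.exp (k2 * n) := by
  obtain ⟨c₀, hc₀⟩ := hbelow
  -- the function h = g - c₀ + 1 ≥ 1
  set h : V → ℝ := fun v => g u v - c₀ + 1 with hhdef
  have hge : ∀ v : V, 1 ≤ h v := by
    intro v
    have := hc₀ v.1 v.2
    simp only [hhdef, g, Prod.mk.eta]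
    rw [show ((v.1, v.2) : V) = v from rfl] at this
    linarith
  set cw : V → Fin 6 → ℝ := fun v i => ew u v (nb v i) with hcwdef
  have hsym : ∀ (v : V) (i : Fin 6), cw v i = cw (nb v i) (i + 3) := by
    intro v i
    simp only [hcwdef]
    rw [nb_opp, ew_symm]
  have hharm : ∀ v : V, ∑ i : Fin 6, cw v i * (h (nb v i) - h v) = 0 := by
    intro v
    have := harmonic u hpack v
    rw [← this]
    apply Finset.sum_congr rfl
    intro i _
    simp only [hhdef, hcwdef]
    ring
  have hgconst : ∀ (v : V) (i : Fin 6), g u (nb v i) = g u v := by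
    intro v i
    have := liouville cw h hsym (fun v i => ew_le_one u v (nb v i))
      (fun v i => ew_pos u v (nb v i)) hharm hge v i
    simp only [hhdef] at this
    linarith
  -- g is constant on the lattice
  set k1 : ℝ := g u (0, 0) with hk1def
  have hstep1 : ∀ v : V, g u (v.1 + 1, v.2) = g u v := fun v => hgconst v 0
  have hstep2 : ∀ v : V, g u (v.1, v.2 + 1) = g u v := fun v => hgconst v 1
  have hgc : ∀ v : V, g u v = k1 := by
    have hm : ∀ m n : ℤ, g u (m, n) = g u (0, n) := by
      intro m n
      exact const1d (fun m => g u (m, n)) (fun m => hstep1 (m, n)) m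
    have hn : ∀ n : ℤ, g u (0, n) = g u (0, 0) := by
      exact const1d (fun n => g u (0, n)) (fun n => hstep2 (0, n))
    intro v
    rw [show v = (v.1, v.2) from rfl, hm v.1 v.2, hn v.2, hk1def]
  have hD1 : ∀ m n : ℤ, u (m + 1, n) - u (m, n) = k1 := by
    intro m n
    exact hgc (m, n)
  -- second direction via Doyle identity and monotonicity
  have hD2step : ∀ m n : ℤ, u (m, n + 1) - u (m, n) = u (m, n) - u (m, n - 1) := by
    intro m n
    have hp := hpack m n
    unfold packingEq at hp
    rw [ang_exp, ang_exp, ang_exp, ang_exp, ang_exp, ang_exp] at hp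
    set s : ℝ := u (m, n) - u (m, n - 1) with hsdef
    set t : ℝ := u (m, n + 1) - u (m, n) with htdef
    have e1 : u (m + 1, n) - u (m, n) = k1 := hD1 m n
    have e3 : u (m - 1, n + 1) - u (m, n) = t - k1 := by
      have := hD1 (m - 1) (n + 1)
      rw [show (m - 1 + 1) = m by ring] at this
      rw [htdef]
      linarith
    have e4 : u (m - 1, n) - u (m, n) = -k1 := by
      have := hD1 (m - 1) n
      rw [show (m - 1 + 1) = m by ring] at this
      linarith
    have e5 : u (m, n - 1) - u (m, n) = -s := by rw [hsdef]; ring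
    have e6 : u (m + 1, n - 1) - u (m, n) = k1 - s := by
      have := hD1 m (n - 1)
      rw [hsdef]
      linarith
    rw [e1, e3, e4, e5, e6] at hp
    exact (hexSum_eq_imp k1 s t hp).symm
  set k2 : ℝ := u (0, 1) - u (0, 0) with hk2def
  have hD2 : ∀ m n : ℤ, u (m, n + 1) - u (m, n) = k2 := by
    intro m n
    have hstepn : ∀ j : ℤ, u (m, j + 1 + 1) - u (m, j + 1) = u (m, j + 1) - u (m, j) := by
      intro j
      have := hD2step m (j + 1)
      rw [show (j + 1 - 1) = j by ring] at this
      exact this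
    have hcn : u (m, n + 1) - u (m, n) = u (m, 0 + 1) - u (m, 0) :=
      const1d (fun j => u (m, j + 1) - u (m, j)) hstepn n
    have hstepm : ∀ i : ℤ, u (i + 1, 0 + 1) - u (i + 1, 0) = u (i, 0 + 1) - u (i, 0) := by
      intro i
      have h1 := hD1 i (0 + 1)
      have h2 := hD1 i 0
      linarith
    have hcm : u (m, 0 + 1) - u (m, 0) = u (0, 0 + 1) - u (0, 0) :=
      const1d (fun i => u (i, 0 + 1) - u (i, 0)) hstepm m
    rw [hcn, hcm, hk2def]
    norm_num
  -- the exponential formula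
  refine ⟨k1, k2, hD1, hD2, ?_⟩
  have hulin : ∀ m n : ℤ, u (m, n) = u (0, 0) + k1 * m + k2 * n := by
    have hrow : ∀ n : ℤ, u (0, n) = u (0, 0) + k2 * n := by
      intro n
      have := lin1d (fun j => u (0, j)) k2 (fun j => by
        have := hD2 0 j
        linarith) n
      simpa using this
    intro m n
    have := lin1d (fun i => u (i, n)) k1 (fun i => by
      have := hD1 i n
      linarith) m
    rw [this, hrow n]
    ring
  intro m n
  rw [hulin m n, Real.exp_add, Real.exp_add]
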